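/- The Neumann jump operator N is symmetric positive definite, and the pushforward of the Gaussian measure γ_M on ℝ^I under the linear map T : ℝ^I → ℝ^L × ℝ^D × ℝ^R defined by T(x) = ( x_L + (M_LL)⁻¹ M_LD x_D , x_D , x_R + (M_RR)⁻¹ M_RD x_D ) is the product measure γ_{M_LL} ⊗ γ_N ⊗ γ_{M_RR}. In particular, under γ_M the three random vectors φ_l = x_L + (M_LL)⁻¹ M_LD x_D, w = x_D and φ_r = x_R + (M_RR)⁻¹ M_RD x_D are mutually independent, centered Gaussian with covariance matrices (M_LL)⁻¹, N⁻¹ and (M_RR)⁻¹ respectively. (Decomposition of the discrete free field as φ = φ_l + Pw + φ_r with independent components.) -/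

import Mathlib

open Matrix MeasureTheory

/-- The block of a matrix corresponding to two finite index subsets. -/
def finsetBlock {I : Type*} (M : Matrix I I ℝ) (S T : Finset I) : Matrix ↥S ↥T ℝ :=
  M.submatrix (fun i => (i : I)) (fun j => (j : I))

/-- The centered Gaussian measure on `ℝ^J` with density
`(2π)^{-|J|/2} (det Q)^{1/2} exp(-½ xᵀ Q x)` with respect to Lebesgue measure
(its covariance matrix is `Q⁻¹`). -/
noncomputable def gaussianOf {J : Type*} [Fintype J] [DecidableEq J] (Q : Matrix J J ℝ) :
    Measure (J → ℝ) :=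
  volume.withDensity fun x =>
    ENNReal.ofReal (Real.sqrt (Q.det / (2 * Real.pi) ^ (Fintype.card J)) *
      Real.exp (-(1/2) * (x ⬝ᵥ Q.mulVec x)))

open scoped ENNReal

namespace StmtAux

variable {I : Type*} [Fintype I] [DecidableEq I]

lemma msymm {M : Matrix I I ℝ} (hM : M.IsHermitian) : ∀ a b, M a b = M b a := fun a b => by
  conv_lhs => rw [← hM]
  simp [conjTranspose_apply]

lemma finsetBlock_isHermitian {M : Matrix I I ℝ} (hM : M.IsHermitian) (S : Finset I) :
    (finsetBlock M S S).IsHermitian := by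
  ext i j
  simp [finsetBlock, conjTranspose_apply, msymm hM]

lemma finsetBlock_conjTranspose {M : Matrix I I ℝ} (hM : M.IsHermitian) (S T : Finset I) :
    (finsetBlock M S T)ᴴ = finsetBlock M T S := by
  ext i j
  simp [finsetBlock, conjTranspose_apply, msymm hM]

lemma finsetBlock_posDef {M : Matrix I I ℝ} (hM : M.PosDef) (S : Finset I) :
    (finsetBlock M S S).PosDef := by
  refine posDef_iff_dotProduct_mulVec.mpr ⟨finsetBlock_isHermitian hM.1 S, fun v hv => ?_⟩
  set x : I → ℝ := fun i => if h : i ∈ S then v ⟨i, h⟩ else 0 with hx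
  have hxS : ∀ j : ↥S, x ↑j = v j := fun j => by simp [hx, j.2]
  have hxne : x ≠ 0 := by
    obtain ⟨j, hj⟩ := Function.ne_iff.1 hv
    exact Function.ne_iff.2 ⟨↑j, by simpa [hxS j] using hj⟩
  have hpos := hM.dotProduct_mulVec_pos hxne
  have key : dotProduct (star x) (M *ᵥ x) = dotProduct (star v) ((finsetBlock M S S) *ᵥ v) := by
    have inner : ∀ i, (M *ᵥ x) i = ∑ j : ↥S, M i ↑j * v j := by
      intro i
      show ∑ j : I, M i j * x j = _
      rw [show (∑ j : I, M i j * x j) = ∑ j ∈ S, M i j * x j from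
        (Finset.sum_subset (Finset.subset_univ S) (fun j _ hj => by simp [hx, hj])).symm,
        ← Finset.sum_coe_sort S (fun j => M i j * x j)]
      exact Finset.sum_congr rfl fun j _ => by rw [hxS j]
    show ∑ i : I, x i * (M *ᵥ x) i = ∑ i : ↥S, v i * _
    rw [show (∑ i : I, x i * (M *ᵥ x) i) = ∑ i ∈ S, x i * (M *ᵥ x) i from
      (Finset.sum_subset (Finset.subset_univ S) (fun i _ hi => by simp [hx, hi])).symm,
      ← Finset.sum_coe_sort S (fun i => x i * (M *ᵥ x) i)]
    refine Finset.sum_congr rfl fun i _ => ?_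
    rw [hxS i, inner ↑i]
    rfl
  rwa [key] at hpos

set_option linter.unusedSectionVars false

section Main

variable (L D R : Finset I)
    (hLD : Disjoint L D) (hLR : Disjoint L R) (hDR : Disjoint D R)
    (hcover : L ∪ D ∪ R = Finset.univ)
    (M : Matrix I I ℝ) (hM : M.PosDef)
    (hzero : ∀ x y : I, (x ∈ L ∧ y ∈ R) ∨ (x ∈ R ∧ y ∈ L) → M x y = 0)

/-- The assembling map. -/
def phi : ↥L ⊕ ↥D ⊕ ↥R → I := Sum.elim (↑·) (Sum.elim (↑·) (↑·))

include hLD hLR hDR hcover in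
lemma phi_bij : Function.Bijective (phi L D R) := by
  constructor
  · rintro (a | a | a) (b | b | b) h <;>
      simp only [phi, Sum.elim_inl, Sum.elim_inr] at h <;>
      first
        | (exact congrArg Sum.inl (Subtype.ext h))
        | (exact congrArg (Sum.inr ∘ Sum.inl) (Subtype.ext h))
        | (exact congrArg (Sum.inr ∘ Sum.inr) (Subtype.ext h))
        | (exfalso; first
            | exact Finset.disjoint_left.1 hLD a.2 (h.symm ▸ b.2)
            | exact Finset.disjoint_left.1 hLD b.2 (h ▸ a.2)
            | exact Finset.disjoint_left.1 hLR a.2 (h.symm ▸ b.2)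
            | exact Finset.disjoint_left.1 hLR b.2 (h ▸ a.2)
            | exact Finset.disjoint_left.1 hDR a.2 (h.symm ▸ b.2)
            | exact Finset.disjoint_left.1 hDR b.2 (h ▸ a.2))
  · intro i
    have hi : i ∈ L ∪ D ∪ R := hcover ▸ Finset.mem_univ i
    rcases Finset.mem_union.1 hi with hi' | hi'
    · rcases Finset.mem_union.1 hi' with h | h
      · exact ⟨Sum.inl ⟨i, h⟩, rfl⟩
      · exact ⟨Sum.inr (Sum.inl ⟨i, h⟩), rfl⟩
    · exact ⟨Sum.inr (Sum.inr ⟨i, hi'⟩), rfl⟩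


/-- Real version of the first Schur complement identity. -/
lemma schur_real₁ {m n : Type*} [Fintype m] [DecidableEq m] [Fintype n] {A : Matrix m m ℝ}
    (B : Matrix m n ℝ) (Dm : Matrix n n ℝ) (x : m → ℝ) (y : n → ℝ) [Invertible A]
    (hA : A.IsHermitian) :
    (Sum.elim x y) ⬝ᵥ (fromBlocks A B Bᴴ Dm) *ᵥ (Sum.elim x y) =
      (x + (A⁻¹ * B) *ᵥ y) ⬝ᵥ A *ᵥ (x + (A⁻¹ * B) *ᵥ y)
        + y ⬝ᵥ (Dm - Bᴴ * A⁻¹ * B) *ᵥ y := by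
  have h := Matrix.schur_complement_eq₁₁ B Dm x y hA
  simpa [dotProduct_mulVec] using h

lemma schur_real₂ {m n : Type*} [Fintype m] [Fintype n] [DecidableEq n] (A : Matrix m m ℝ)
    (B : Matrix m n ℝ) {Dm : Matrix n n ℝ} (x : m → ℝ) (y : n → ℝ) [Invertible Dm]
    (hD : Dm.IsHermitian) :
    (Sum.elim x y) ⬝ᵥ (fromBlocks A B Bᴴ Dm) *ᵥ (Sum.elim x y) =
      ((Dm⁻¹ * Bᴴ) *ᵥ x + y) ⬝ᵥ Dm *ᵥ ((Dm⁻¹ * Bᴴ) *ᵥ x + y)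
        + x ⬝ᵥ (A - B * Dm⁻¹ * Bᴴ) *ᵥ x := by
  have h := Matrix.schur_complement_eq₂₂ A B x y hD
  simpa [dotProduct_mulVec] using h

/-- The Neumann jump operator. -/
noncomputable def nmat : Matrix ↥D ↥D ℝ :=
  finsetBlock M D D - finsetBlock M D L * (finsetBlock M L L)⁻¹ * finsetBlock M L D
    - finsetBlock M D R * (finsetBlock M R R)⁻¹ * finsetBlock M R D

include hM hzero in
lemma M_decomp :
    M.submatrix (phi L D R) (phi L D R) =
      fromBlocks (finsetBlock M L L) (fromCols (finsetBlock M L D) 0)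
        (fromCols (finsetBlock M L D) 0)ᴴ
        (fromBlocks (finsetBlock M D D) (finsetBlock M D R)
          (finsetBlock M R D) (finsetBlock M R R)) := by
  ext (i | i | i) (j | j | j) <;>
    simp only [phi, Sum.elim_inl, Sum.elim_inr, submatrix_apply, fromBlocks_apply₁₁,
      fromBlocks_apply₁₂, fromBlocks_apply₂₁, fromBlocks_apply₂₂,
      conjTranspose_fromCols_eq_fromRows_conjTranspose, conjTranspose_zero,
      fromCols, fromRows, of_apply, conjTranspose_apply, finsetBlock,
      Matrix.zero_apply, star_trivial] <;>
    first
      | rfl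
      | exact hzero _ _ (Or.inl ⟨i.2, j.2⟩)
      | exact hzero _ _ (Or.inr ⟨i.2, j.2⟩)
      | exact msymm hM.1 _ _

include hLD hLR hDR hcover hM hzero in
lemma quad_id (x : I → ℝ) :
    x ⬝ᵥ M *ᵥ x =
      ((fun l : ↥L => x ↑l) + ((finsetBlock M L L)⁻¹ * finsetBlock M L D) *ᵥ (fun d : ↥D => x ↑d))
          ⬝ᵥ finsetBlock M L L *ᵥ
        ((fun l : ↥L => x ↑l) + ((finsetBlock M L L)⁻¹ * finsetBlock M L D) *ᵥ (fun d : ↥D => x ↑d))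
      + ((((finsetBlock M R R)⁻¹ * finsetBlock M R D) *ᵥ (fun d : ↥D => x ↑d) + (fun r : ↥R => x ↑r))
          ⬝ᵥ finsetBlock M R R *ᵥ
          (((finsetBlock M R R)⁻¹ * finsetBlock M R D) *ᵥ (fun d : ↥D => x ↑d) + (fun r : ↥R => x ↑r))
      + (fun d : ↥D => x ↑d) ⬝ᵥ nmat L D R M *ᵥ (fun d : ↥D => x ↑d)) := by
  classical
  have hALL := finsetBlock_posDef hM L
  have hARR := finsetBlock_posDef hM R
  letI := hALL.isUnit.invertible
  letI := hARR.isUnit.invertible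
  set xL : ↥L → ℝ := fun l => x ↑l
  set xD : ↥D → ℝ := fun d => x ↑d
  set xR : ↥R → ℝ := fun r => x ↑r
  set e : (↥L ⊕ ↥D ⊕ ↥R) ≃ I := Equiv.ofBijective _ (phi_bij L D R hLD hLR hDR hcover)
  have he : ⇑e = phi L D R := rfl
  have h1 : x ⬝ᵥ M *ᵥ x = (x ∘ ⇑e) ⬝ᵥ (M.submatrix ⇑e ⇑e) *ᵥ (x ∘ ⇑e) := by
    rw [Matrix.submatrix_mulVec_equiv M (x ∘ ⇑e) ⇑e e]
    have hxe : (x ∘ ⇑e) ∘ ⇑e.symm = x := by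
      funext i
      show x (e (e.symm i)) = x i
      rw [Equiv.apply_symm_apply]
    rw [hxe]
    exact (Equiv.sum_comp e fun i => x i * (M *ᵥ x) i).symm
  have hx : x ∘ phi L D R = Sum.elim xL (Sum.elim xD xR) := by
    funext j; rcases j with j | j | j <;> rfl
  rw [h1, he, hx, M_decomp L D R M hM hzero,
    schur_real₁ _ _ _ _ hALL.isHermitian]
  have hPL : ((finsetBlock M L L)⁻¹ * fromCols (finsetBlock M L D) 0) *ᵥ Sum.elim xD xR
      = ((finsetBlock M L L)⁻¹ * finsetBlock M L D) *ᵥ xD := by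
    rw [mul_fromCols, Matrix.mul_zero, fromCols_mulVec_sumElim, Matrix.zero_mulVec,
      add_zero]
  have hBH : (fromCols (finsetBlock M L D) (0 : Matrix ↥L ↥R ℝ))ᴴ
      = fromRows (finsetBlock M D L) 0 := by
    rw [conjTranspose_fromCols_eq_fromRows_conjTranspose, conjTranspose_zero,
      finsetBlock_conjTranspose hM.1]
  have hBAB : (fromCols (finsetBlock M L D) (0 : Matrix ↥L ↥R ℝ))ᴴ
        * (finsetBlock M L L)⁻¹ * fromCols (finsetBlock M L D) (0 : Matrix ↥L ↥R ℝ)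
      = fromBlocks (finsetBlock M D L * (finsetBlock M L L)⁻¹ * finsetBlock M L D) 0 0 0 := by
    rw [hBH, fromRows_mul, Matrix.zero_mul, fromRows_mul_fromCols]
    simp
  have hF2 : fromBlocks (finsetBlock M D D) (finsetBlock M D R)
        (finsetBlock M R D) (finsetBlock M R R)
      - (fromCols (finsetBlock M L D) (0 : Matrix ↥L ↥R ℝ))ᴴ
        * (finsetBlock M L L)⁻¹ * fromCols (finsetBlock M L D) (0 : Matrix ↥L ↥R ℝ)
      = fromBlocks (finsetBlock M D D - finsetBlock M D L * (finsetBlock M L L)⁻¹ * finsetBlock M L D)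
          (finsetBlock M D R) ((finsetBlock M D R)ᴴ) (finsetBlock M R R) := by
    rw [hBAB, finsetBlock_conjTranspose hM.1]
    ext (i | i) (j | j) <;> simp
  rw [hPL, hF2, schur_real₂ _ _ _ _ hARR.isHermitian, finsetBlock_conjTranspose hM.1]
  rfl


include hLD hLR hDR hcover hM hzero in
lemma nmat_posDef : (nmat L D R M).PosDef := by
  classical
  have hALL := finsetBlock_posDef hM L
  have hARR := finsetBlock_posDef hM R
  refine posDef_iff_dotProduct_mulVec.mpr ⟨?_, ?_⟩
  · have h1 : (finsetBlock M D D).IsHermitian := finsetBlock_isHermitian hM.1 D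
    have h2 : (finsetBlock M D L * (finsetBlock M L L)⁻¹ * finsetBlock M L D).IsHermitian := by
      have := Matrix.isHermitian_conjTranspose_mul_mul (finsetBlock M L D) hALL.isHermitian.inv
      rwa [finsetBlock_conjTranspose hM.1] at this
    have h3 : (finsetBlock M D R * (finsetBlock M R R)⁻¹ * finsetBlock M R D).IsHermitian := by
      have := Matrix.isHermitian_conjTranspose_mul_mul (finsetBlock M R D) hARR.isHermitian.inv
      rwa [finsetBlock_conjTranspose hM.1] at this
    exact (h1.sub h2).sub h3
  · intro v hv
    set x : I → ℝ := fun i =>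
      if h : i ∈ D then v ⟨i, h⟩
      else if h : i ∈ L then (-(((finsetBlock M L L)⁻¹ * finsetBlock M L D) *ᵥ v)) ⟨i, h⟩
      else if h : i ∈ R then (-(((finsetBlock M R R)⁻¹ * finsetBlock M R D) *ᵥ v)) ⟨i, h⟩
      else 0 with hxdef
    have hxD : (fun d : ↥D => x ↑d) = v := by
      funext d; simp [hxdef, d.2]
    have hxL : (fun l : ↥L => x ↑l)
        = -(((finsetBlock M L L)⁻¹ * finsetBlock M L D) *ᵥ v) := by
      funext l
      have hnotD : (l : I) ∉ D := Finset.disjoint_left.1 hLD l.2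
      simp [hxdef, hnotD, l.2]
    have hxR : (fun r : ↥R => x ↑r)
        = -(((finsetBlock M R R)⁻¹ * finsetBlock M R D) *ᵥ v) := by
      funext r
      have hnotD : (r : I) ∉ D := Finset.disjoint_right.1 hDR r.2
      have hnotL : (r : I) ∉ L := Finset.disjoint_right.1 hLR r.2
      simp [hxdef, hnotD, hnotL, r.2]
    have hxne : x ≠ 0 := by
      obtain ⟨d, hd⟩ := Function.ne_iff.1 hv
      refine Function.ne_iff.2 ⟨↑d, ?_⟩
      have : x ↑d = v d := by simp [hxdef, d.2]
      simpa [this] using hd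
    have hq := quad_id L D R hLD hLR hDR hcover M hM hzero x
    rw [hxD, hxL, hxR, neg_add_cancel] at hq
    rw [show ((finsetBlock M R R)⁻¹ * finsetBlock M R D) *ᵥ v
        + -(((finsetBlock M R R)⁻¹ * finsetBlock M R D) *ᵥ v) = 0 from add_neg_cancel _] at hq
    simp only [Matrix.mulVec_zero, dotProduct_zero, zero_add] at hq
    have hpos := hM.dotProduct_mulVec_pos hxne
    have hsx : star x = x := funext fun i => rfl
    have hsv : star v = v := funext fun i => rfl
    rw [hsx, hq] at hpos
    rwa [hsv]

include hLD hLR hDR hcover hM hzero in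
lemma det_eq :
    M.det = (finsetBlock M L L).det * ((finsetBlock M R R).det * (nmat L D R M).det) := by
  classical
  have hALL := finsetBlock_posDef hM L
  have hARR := finsetBlock_posDef hM R
  letI := hALL.isUnit.invertible
  letI := hARR.isUnit.invertible
  set e : (↥L ⊕ ↥D ⊕ ↥R) ≃ I := Equiv.ofBijective _ (phi_bij L D R hLD hLR hDR hcover)
  have he : ⇑e = phi L D R := rfl
  have h0 : M.det = (M.submatrix ⇑e ⇑e).det := (Matrix.det_submatrix_equiv_self e M).symm
  have hBH : (fromCols (finsetBlock M L D) (0 : Matrix ↥L ↥R ℝ))ᴴ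
      = fromRows (finsetBlock M D L) 0 := by
    rw [conjTranspose_fromCols_eq_fromRows_conjTranspose, conjTranspose_zero,
      finsetBlock_conjTranspose hM.1]
  have hBAB : (fromCols (finsetBlock M L D) (0 : Matrix ↥L ↥R ℝ))ᴴ
        * (finsetBlock M L L)⁻¹ * fromCols (finsetBlock M L D) (0 : Matrix ↥L ↥R ℝ)
      = fromBlocks (finsetBlock M D L * (finsetBlock M L L)⁻¹ * finsetBlock M L D) 0 0 0 := by
    rw [hBH, fromRows_mul, Matrix.zero_mul, fromRows_mul_fromCols]
    simp
  have hF2 : fromBlocks (finsetBlock M D D) (finsetBlock M D R)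
        (finsetBlock M R D) (finsetBlock M R R)
      - (fromCols (finsetBlock M L D) (0 : Matrix ↥L ↥R ℝ))ᴴ
        * (finsetBlock M L L)⁻¹ * fromCols (finsetBlock M L D) (0 : Matrix ↥L ↥R ℝ)
      = fromBlocks (finsetBlock M D D - finsetBlock M D L * (finsetBlock M L L)⁻¹ * finsetBlock M L D)
          (finsetBlock M D R) ((finsetBlock M D R)ᴴ) (finsetBlock M R R) := by
    rw [hBAB, finsetBlock_conjTranspose hM.1]
    ext (i | i) (j | j) <;> simp
  rw [h0, he, M_decomp L D R M hM hzero, Matrix.det_fromBlocks₁₁,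
    Matrix.invOf_eq_nonsing_inv, hF2, Matrix.det_fromBlocks₂₂, Matrix.invOf_eq_nonsing_inv,
    finsetBlock_conjTranspose hM.1]
  rfl

include hLD hLR hDR hcover in
lemma card_sum : Fintype.card I = L.card + (D.card + R.card) := by
  have hLDR : Disjoint (L ∪ D) R := Finset.disjoint_union_left.2 ⟨hLR, hDR⟩
  rw [← Finset.card_univ, ← hcover, Finset.card_union_of_disjoint hLDR,
    Finset.card_union_of_disjoint hLD, add_assoc]


section MeasureAux

lemma map_withDensity_eq {α β : Type*} [MeasurableSpace α] [MeasurableSpace β]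
    {μ : Measure α} {ν : Measure β} {T : α → β} (hT : MeasurePreserving T μ ν)
    {g : β → ℝ≥0∞} (hg : Measurable g) :
    Measure.map T (μ.withDensity (fun x => g (T x))) = ν.withDensity g := by
  ext s hs
  rw [Measure.map_apply hT.measurable hs, withDensity_apply _ (hT.measurable hs),
    withDensity_apply _ hs, ← hT.map_eq, setLIntegral_map hs hg hT.measurable]

lemma prod_withDensity {α β : Type*} [MeasurableSpace α] [MeasurableSpace β]
    {μ : Measure α} {ν : Measure β} [SigmaFinite μ] [SigmaFinite ν]
    {f : α → ℝ≥0∞} {g : β → ℝ≥0∞} (hf : Measurable f) (hg : Measurable g)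
    [SigmaFinite (μ.withDensity f)] [SigmaFinite (ν.withDensity g)] :
    (μ.withDensity f).prod (ν.withDensity g)
      = (μ.prod ν).withDensity (fun p => f p.1 * g p.2) := by
  refine Measure.prod_eq fun s t hs ht => ?_
  rw [withDensity_apply _ (hs.prod ht), ← Measure.prod_restrict,
    lintegral_prod_mul hf.aemeasurable hg.aemeasurable,
    withDensity_apply _ hs, withDensity_apply _ ht]

lemma measurable_mulVec {m n : Type*} [Fintype m] [Fintype n] (A : Matrix m n ℝ) :
    Measurable fun v : n → ℝ => A *ᵥ v := by
  refine measurable_pi_lambda _ fun i => ?_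
  simp only [Matrix.mulVec, dotProduct]
  exact Finset.measurable_sum _ fun j _ => by fun_prop

lemma measurable_quad {J : Type*} [Fintype J] (Q : Matrix J J ℝ) :
    Measurable fun x : J → ℝ => x ⬝ᵥ Q *ᵥ x := by
  simp only [dotProduct, Matrix.mulVec]
  refine Finset.measurable_sum _ fun i _ => (measurable_pi_apply i).mul ?_
  exact Finset.measurable_sum _ fun j _ => by fun_prop

lemma measurable_density {J : Type*} [Fintype J] [DecidableEq J] (Q : Matrix J J ℝ) :
    Measurable fun x : J → ℝ =>
      ENNReal.ofReal (Real.sqrt (Q.det / (2 * Real.pi) ^ (Fintype.card J)) *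
        Real.exp (-(1/2) * (x ⬝ᵥ Q.mulVec x))) := by
  refine ENNReal.measurable_ofReal.comp (Measurable.const_mul ?_ _)
  exact Real.measurable_exp.comp ((measurable_quad Q).const_mul _)

end MeasureAux

include hLD hLR hDR hcover in
lemma measurePreserving_split :
    MeasurePreserving
      (fun x : I → ℝ => ((fun l : ↥L => x ↑l), ((fun d : ↥D => x ↑d), (fun r : ↥R => x ↑r))))
      volume (volume : Measure ((↥L → ℝ) × ((↥D → ℝ) × (↥R → ℝ)))) := by
  have hmem : ∀ i : I, i ∈ L ∪ D ∪ R := fun i => by rw [hcover]; exact Finset.mem_univ i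
  set f : ↥(L ∪ D ∪ R) ≃ I := Equiv.subtypeUnivEquiv hmem
  have hUR : Disjoint (L ∪ D) R := Finset.disjoint_union_left.2 ⟨hLR, hDR⟩
  have m1 : MeasurePreserving
      (MeasurableEquiv.piCongrLeft (fun _ : I => ℝ) f).symm volume volume :=
    (volume_measurePreserving_piCongrLeft (fun _ : I => ℝ) f).symm _
  have m2 : MeasurePreserving
      (MeasurableEquiv.piFinsetUnion (fun _ : I => ℝ) hUR).symm volume volume :=
    (volume_preserving_piFinsetUnion (fun _ : I => ℝ) hUR).symm _
  have m3 : MeasurePreserving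
      (MeasurableEquiv.piFinsetUnion (fun _ : I => ℝ) hLD).symm volume volume :=
    (volume_preserving_piFinsetUnion (fun _ : I => ℝ) hLD).symm _
  have m4 : MeasurePreserving (Prod.map
      (⇑(MeasurableEquiv.piFinsetUnion (fun _ : I => ℝ) hLD).symm)
      (id : (↥R → ℝ) → (↥R → ℝ)))
      volume volume :=
    m3.prod (MeasurePreserving.id _)
  have m5 : MeasurePreserving
      (MeasurableEquiv.prodAssoc :
        (((↥L → ℝ) × (↥D → ℝ)) × (↥R → ℝ)) ≃ᵐ ((↥L → ℝ) × ((↥D → ℝ) × (↥R → ℝ))))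
      volume volume := volume_preserving_prodAssoc
  have c1 := m2.comp m1
  have c2 := m4.comp c1
  have comp := m5.comp c2
  convert comp using 1
  rfl


lemma measurePreserving_shear (PL : Matrix ↥L ↥D ℝ) (PR : Matrix ↥R ↥D ℝ) :
    MeasurePreserving (fun p : (↥L → ℝ) × ((↥D → ℝ) × (↥R → ℝ)) =>
      (p.1 + PL *ᵥ p.2.1, (p.2.1, p.2.2 + PR *ᵥ p.2.1)))
      volume volume := by
  have hS2 : MeasurePreserving (fun q : (↥D → ℝ) × (↥R → ℝ) => (q.1, q.2 + PR *ᵥ q.1))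
      volume volume := by
    refine MeasurePreserving.skew_product (g := fun b c => c + PR *ᵥ b)
      (MeasurePreserving.id volume) ?_ (ae_of_all _ fun b => ?_)
    · exact measurable_snd.add ((measurable_mulVec PR).comp measurable_fst)
    · exact map_add_right_eq_self volume (PR *ᵥ b)
  have hS1 : MeasurePreserving (fun q : ((↥D → ℝ) × (↥R → ℝ)) × (↥L → ℝ) =>
      ((q.1.1, q.1.2 + PR *ᵥ q.1.1), q.2 + PL *ᵥ q.1.1)) volume volume := by
    refine hS2.skew_product (g := fun p a => a + PL *ᵥ p.1) ?_ (ae_of_all _ fun p => ?_)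
    · exact measurable_snd.add ((measurable_mulVec PL).comp (measurable_fst.comp measurable_fst))
    · exact map_add_right_eq_self volume (PL *ᵥ p.1)
  have hswap1 : MeasurePreserving (Prod.swap :
      ((↥L → ℝ) × ((↥D → ℝ) × (↥R → ℝ))) → (((↥D → ℝ) × (↥R → ℝ)) × (↥L → ℝ)))
      volume volume := Measure.measurePreserving_swap
  have hswap2 : MeasurePreserving (Prod.swap :
      ((((↥D → ℝ) × (↥R → ℝ))) × (↥L → ℝ)) → ((↥L → ℝ) × ((↥D → ℝ) × (↥R → ℝ))))
      volume volume := Measure.measurePreserving_swap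
  have c1 := hS1.comp hswap1
  have comp := hswap2.comp c1
  convert comp using 1
  rfl

include hLD hLR hDR hcover hM hzero in
lemma density_eq (x : I → ℝ) :
    ENNReal.ofReal (Real.sqrt (M.det / (2 * Real.pi) ^ (Fintype.card I)) *
        Real.exp (-(1/2) * (x ⬝ᵥ M.mulVec x)))
      = ENNReal.ofReal
          (Real.sqrt ((finsetBlock M L L).det / (2 * Real.pi) ^ (Fintype.card ↥L)) *
          Real.exp (-(1/2) * ((fun l : ↥L => x ↑l + ((finsetBlock M L L)⁻¹ * finsetBlock M L D).mulVec (fun d : ↥D => x ↑d) l) ⬝ᵥ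
            (finsetBlock M L L).mulVec (fun l : ↥L => x ↑l + ((finsetBlock M L L)⁻¹ * finsetBlock M L D).mulVec (fun d : ↥D => x ↑d) l))))
        * (ENNReal.ofReal
            (Real.sqrt (((finsetBlock M D D
      - finsetBlock M D L * (finsetBlock M L L)⁻¹ * finsetBlock M L D
      - finsetBlock M D R * (finsetBlock M R R)⁻¹ * finsetBlock M R D)).det / (2 * Real.pi) ^ (Fintype.card ↥D)) *
            Real.exp (-(1/2) * ((fun d : ↥D => x ↑d) ⬝ᵥ
              ((finsetBlock M D D
      - finsetBlock M D L * (finsetBlock M L L)⁻¹ * finsetBlock M L D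
      - finsetBlock M D R * (finsetBlock M R R)⁻¹ * finsetBlock M R D)).mulVec (fun d : ↥D => x ↑d))))
          * ENNReal.ofReal
            (Real.sqrt ((finsetBlock M R R).det / (2 * Real.pi) ^ (Fintype.card ↥R)) *
            Real.exp (-(1/2) * ((fun r : ↥R => x ↑r + ((finsetBlock M R R)⁻¹ * finsetBlock M R D).mulVec (fun d : ↥D => x ↑d) r) ⬝ᵥ
              (finsetBlock M R R).mulVec (fun r : ↥R => x ↑r + ((finsetBlock M R R)⁻¹ * finsetBlock M R D).mulVec (fun d : ↥D => x ↑d) r))))) := by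
  have hn : (finsetBlock M D D
      - finsetBlock M D L * (finsetBlock M L L)⁻¹ * finsetBlock M L D
      - finsetBlock M D R * (finsetBlock M R R)⁻¹ * finsetBlock M R D) = nmat L D R M := rfl
  have ha : (fun l : ↥L => x ↑l + ((finsetBlock M L L)⁻¹ * finsetBlock M L D).mulVec (fun d : ↥D => x ↑d) l)
      = (fun l : ↥L => x ↑l)
        + ((finsetBlock M L L)⁻¹ * finsetBlock M L D) *ᵥ (fun d : ↥D => x ↑d) := rfl
  have hc : (fun r : ↥R => x ↑r + ((finsetBlock M R R)⁻¹ * finsetBlock M R D).mulVec (fun d : ↥D => x ↑d) r)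
      = (fun r : ↥R => x ↑r)
        + ((finsetBlock M R R)⁻¹ * finsetBlock M R D) *ᵥ (fun d : ↥D => x ↑d) := rfl
  rw [hn, ha, hc]
  have hALL := finsetBlock_posDef hM L
  have hARR := finsetBlock_posDef hM R
  have hN := nmat_posDef L D R hLD hLR hDR hcover M hM hzero
  have h2π : (0:ℝ) < 2 * Real.pi := by positivity
  rw [← ENNReal.ofReal_mul (by positivity), ← ENNReal.ofReal_mul (by positivity)]
  congr 1
  have hcard := card_sum L D R hLD hLR hDR hcover
  have hdet := det_eq L D R hLD hLR hDR hcover M hM hzero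
  have hq := quad_id L D R hLD hLR hDR hcover M hM hzero x
  have hvec : (fun r : ↥R => x ↑r)
      + ((finsetBlock M R R)⁻¹ * finsetBlock M R D) *ᵥ (fun d : ↥D => x ↑d)
      = ((finsetBlock M R R)⁻¹ * finsetBlock M R D) *ᵥ (fun d : ↥D => x ↑d)
        + (fun r : ↥R => x ↑r) := add_comm _ _
  rw [hvec]
  have hconst : Real.sqrt (M.det / (2 * Real.pi) ^ (Fintype.card I))
      = Real.sqrt ((finsetBlock M L L).det / (2 * Real.pi) ^ (Fintype.card ↥L))
        * (Real.sqrt ((nmat L D R M).det / (2 * Real.pi) ^ (Fintype.card ↥D))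
          * Real.sqrt ((finsetBlock M R R).det / (2 * Real.pi) ^ (Fintype.card ↥R))) := by
    have hsplit : M.det / (2 * Real.pi) ^ (Fintype.card I)
        = ((finsetBlock M L L).det / (2 * Real.pi) ^ (Fintype.card ↥L))
          * (((nmat L D R M).det / (2 * Real.pi) ^ (Fintype.card ↥D))
            * ((finsetBlock M R R).det / (2 * Real.pi) ^ (Fintype.card ↥R))) := by
      simp only [Fintype.card_coe]
      rw [hdet, hcard, pow_add, pow_add, div_mul_div_comm, div_mul_div_comm]
      ring
    rw [hsplit,
      Real.sqrt_mul (div_nonneg hALL.det_pos.le (by positivity)),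
      Real.sqrt_mul (div_nonneg hN.det_pos.le (by positivity))]
  rw [hconst, hq]
  set A := ((fun l : ↥L => x ↑l)
      + ((finsetBlock M L L)⁻¹ * finsetBlock M L D) *ᵥ (fun d : ↥D => x ↑d)) ⬝ᵥ
    (finsetBlock M L L).mulVec ((fun l : ↥L => x ↑l)
      + ((finsetBlock M L L)⁻¹ * finsetBlock M L D) *ᵥ (fun d : ↥D => x ↑d)) with hA
  set B := (fun d : ↥D => x ↑d) ⬝ᵥ (nmat L D R M).mulVec (fun d : ↥D => x ↑d) with hB
  set C := (((finsetBlock M R R)⁻¹ * finsetBlock M R D) *ᵥ (fun d : ↥D => x ↑d)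
      + (fun r : ↥R => x ↑r)) ⬝ᵥ
    (finsetBlock M R R).mulVec (((finsetBlock M R R)⁻¹ * finsetBlock M R D) *ᵥ (fun d : ↥D => x ↑d)
      + (fun r : ↥R => x ↑r)) with hC
  rw [show -(1/2:ℝ) * (A + (C + B)) = -(1/2) * A + (-(1/2) * B + -(1/2) * C) by ring,
    Real.exp_add, Real.exp_add]
  ring

end Main

end StmtAux

set_option maxHeartbeats 2000000 in
/-- The Neumann jump operator `N` is symmetric positive definite, and the pushforward of
the Gaussian measure `γ_M` under
`T(x) = (x_L + (M_LL)⁻¹ M_LD x_D, x_D, x_R + (M_RR)⁻¹ M_RD x_D)` is the product measure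
`γ_{M_LL} ⊗ γ_N ⊗ γ_{M_RR}`: the discrete free field decomposes as `φ = φ_l + Pw + φ_r`
with independent components. -/
theorem stmt_2 {I : Type*} [Fintype I] [DecidableEq I]
    (L D R : Finset I)
    (hLD : Disjoint L D) (hLR : Disjoint L R) (hDR : Disjoint D R)
    (hcover : L ∪ D ∪ R = Finset.univ)
    (M : Matrix I I ℝ) (hM : M.PosDef)
    (hzero : ∀ x y : I, (x ∈ L ∧ y ∈ R) ∨ (x ∈ R ∧ y ∈ L) → M x y = 0) :
    (finsetBlock M D D
      - finsetBlock M D L * (finsetBlock M L L)⁻¹ * finsetBlock M L D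
      - finsetBlock M D R * (finsetBlock M R R)⁻¹ * finsetBlock M R D).PosDef ∧
    Measure.map
      (fun x : I → ℝ =>
        ((fun l : ↥L => x l + ((finsetBlock M L L)⁻¹ * finsetBlock M L D).mulVec
            (fun d : ↥D => x d) l),
         (fun d : ↥D => x d),
         (fun r : ↥R => x r + ((finsetBlock M R R)⁻¹ * finsetBlock M R D).mulVec
            (fun d : ↥D => x d) r)))
      (gaussianOf M)
    = (gaussianOf (finsetBlock M L L)).prod
        ((gaussianOf (finsetBlock M D D
          - finsetBlock M D L * (finsetBlock M L L)⁻¹ * finsetBlock M L D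
          - finsetBlock M D R * (finsetBlock M R R)⁻¹ * finsetBlock M R D)).prod
          (gaussianOf (finsetBlock M R R))) := by
  classical
  refine ⟨StmtAux.nmat_posDef L D R hLD hLR hDR hcover M hM hzero, ?_⟩
  have hT : MeasurePreserving
      (fun x : I → ℝ =>
        ((fun l : ↥L => x l + ((finsetBlock M L L)⁻¹ * finsetBlock M L D).mulVec
            (fun d : ↥D => x d) l),
         (fun d : ↥D => x d),
         (fun r : ↥R => x r + ((finsetBlock M R R)⁻¹ * finsetBlock M R D).mulVec
            (fun d : ↥D => x d) r)))
      volume volume :=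
    (StmtAux.measurePreserving_shear L D R ((finsetBlock M L L)⁻¹ * finsetBlock M L D)
        ((finsetBlock M R R)⁻¹ * finsetBlock M R D)).comp
      (StmtAux.measurePreserving_split L D R hLD hLR hDR hcover)
  have hmL : Measurable (fun a : ↥L → ℝ => ENNReal.ofReal (Real.sqrt ((finsetBlock M L L).det / (2 * Real.pi) ^ (Fintype.card ↥L)) * Real.exp (-(1/2) * (a ⬝ᵥ (finsetBlock M L L).mulVec a)))) := StmtAux.measurable_density _
  have hmN : Measurable (fun a : ↥D → ℝ => ENNReal.ofReal (Real.sqrt (((finsetBlock M D D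
      - finsetBlock M D L * (finsetBlock M L L)⁻¹ * finsetBlock M L D
      - finsetBlock M D R * (finsetBlock M R R)⁻¹ * finsetBlock M R D)).det / (2 * Real.pi) ^ (Fintype.card ↥D)) * Real.exp (-(1/2) * (a ⬝ᵥ ((finsetBlock M D D
      - finsetBlock M D L * (finsetBlock M L L)⁻¹ * finsetBlock M L D
      - finsetBlock M D R * (finsetBlock M R R)⁻¹ * finsetBlock M R D)).mulVec a)))) := StmtAux.measurable_density _
  have hmR : Measurable (fun a : ↥R → ℝ => ENNReal.ofReal (Real.sqrt ((finsetBlock M R R).det / (2 * Real.pi) ^ (Fintype.card ↥R)) * Real.exp (-(1/2) * (a ⬝ᵥ (finsetBlock M R R).mulVec a)))) := StmtAux.measurable_density _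
  have hgp : Measurable (fun p : (↥L → ℝ) × ((↥D → ℝ) × (↥R → ℝ)) => (fun a : ↥L → ℝ => ENNReal.ofReal (Real.sqrt ((finsetBlock M L L).det / (2 * Real.pi) ^ (Fintype.card ↥L)) * Real.exp (-(1/2) * (a ⬝ᵥ (finsetBlock M L L).mulVec a)))) p.1 * ((fun a : ↥D → ℝ => ENNReal.ofReal (Real.sqrt (((finsetBlock M D D
      - finsetBlock M D L * (finsetBlock M L L)⁻¹ * finsetBlock M L D
      - finsetBlock M D R * (finsetBlock M R R)⁻¹ * finsetBlock M R D)).det / (2 * Real.pi) ^ (Fintype.card ↥D)) * Real.exp (-(1/2) * (a ⬝ᵥ ((finsetBlock M D D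
      - finsetBlock M D L * (finsetBlock M L L)⁻¹ * finsetBlock M L D
      - finsetBlock M D R * (finsetBlock M R R)⁻¹ * finsetBlock M R D)).mulVec a)))) p.2.1 * (fun a : ↥R → ℝ => ENNReal.ofReal (Real.sqrt ((finsetBlock M R R).det / (2 * Real.pi) ^ (Fintype.card ↥R)) * Real.exp (-(1/2) * (a ⬝ᵥ (finsetBlock M R R).mulVec a)))) p.2.2)) :=
    (hmL.comp measurable_fst).mul
      ((hmN.comp (measurable_fst.comp measurable_snd)).mul
        (hmR.comp (measurable_snd.comp measurable_snd)))
  have hdens : (fun x : I → ℝ =>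
      ENNReal.ofReal (Real.sqrt (M.det / (2 * Real.pi) ^ (Fintype.card I)) *
        Real.exp (-(1/2) * (x ⬝ᵥ M.mulVec x))))
      = fun x : I → ℝ => (fun p : (↥L → ℝ) × ((↥D → ℝ) × (↥R → ℝ)) => (fun a : ↥L → ℝ => ENNReal.ofReal (Real.sqrt ((finsetBlock M L L).det / (2 * Real.pi) ^ (Fintype.card ↥L)) * Real.exp (-(1/2) * (a ⬝ᵥ (finsetBlock M L L).mulVec a)))) p.1 * ((fun a : ↥D → ℝ => ENNReal.ofReal (Real.sqrt (((finsetBlock M D D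
      - finsetBlock M D L * (finsetBlock M L L)⁻¹ * finsetBlock M L D
      - finsetBlock M D R * (finsetBlock M R R)⁻¹ * finsetBlock M R D)).det / (2 * Real.pi) ^ (Fintype.card ↥D)) * Real.exp (-(1/2) * (a ⬝ᵥ ((finsetBlock M D D
      - finsetBlock M D L * (finsetBlock M L L)⁻¹ * finsetBlock M L D
      - finsetBlock M D R * (finsetBlock M R R)⁻¹ * finsetBlock M R D)).mulVec a)))) p.2.1 * (fun a : ↥R → ℝ => ENNReal.ofReal (Real.sqrt ((finsetBlock M R R).det / (2 * Real.pi) ^ (Fintype.card ↥R)) * Real.exp (-(1/2) * (a ⬝ᵥ (finsetBlock M R R).mulVec a)))) p.2.2)) ((fun x : I → ℝ =>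
        ((fun l : ↥L => x l + ((finsetBlock M L L)⁻¹ * finsetBlock M L D).mulVec
            (fun d : ↥D => x d) l),
         (fun d : ↥D => x d),
         (fun r : ↥R => x r + ((finsetBlock M R R)⁻¹ * finsetBlock M R D).mulVec
            (fun d : ↥D => x d) r))) x) :=
    funext fun x => StmtAux.density_eq L D R hLD hLR hDR hcover M hM hzero x
  have h1 : Measure.map (fun x : I → ℝ =>
        ((fun l : ↥L => x l + ((finsetBlock M L L)⁻¹ * finsetBlock M L D).mulVec
            (fun d : ↥D => x d) l),
         (fun d : ↥D => x d),
         (fun r : ↥R => x r + ((finsetBlock M R R)⁻¹ * finsetBlock M R D).mulVec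
            (fun d : ↥D => x d) r))) (gaussianOf M)
      = (volume : Measure ((↥L → ℝ) × ((↥D → ℝ) × (↥R → ℝ)))).withDensity (fun p : (↥L → ℝ) × ((↥D → ℝ) × (↥R → ℝ)) => (fun a : ↥L → ℝ => ENNReal.ofReal (Real.sqrt ((finsetBlock M L L).det / (2 * Real.pi) ^ (Fintype.card ↥L)) * Real.exp (-(1/2) * (a ⬝ᵥ (finsetBlock M L L).mulVec a)))) p.1 * ((fun a : ↥D → ℝ => ENNReal.ofReal (Real.sqrt (((finsetBlock M D D
      - finsetBlock M D L * (finsetBlock M L L)⁻¹ * finsetBlock M L D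
      - finsetBlock M D R * (finsetBlock M R R)⁻¹ * finsetBlock M R D)).det / (2 * Real.pi) ^ (Fintype.card ↥D)) * Real.exp (-(1/2) * (a ⬝ᵥ ((finsetBlock M D D
      - finsetBlock M D L * (finsetBlock M L L)⁻¹ * finsetBlock M L D
      - finsetBlock M D R * (finsetBlock M R R)⁻¹ * finsetBlock M R D)).mulVec a)))) p.2.1 * (fun a : ↥R → ℝ => ENNReal.ofReal (Real.sqrt ((finsetBlock M R R).det / (2 * Real.pi) ^ (Fintype.card ↥R)) * Real.exp (-(1/2) * (a ⬝ᵥ (finsetBlock M R R).mulVec a)))) p.2.2)) := by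
    simp only [gaussianOf]
    rw [hdens]
    have hkey := StmtAux.map_withDensity_eq hT hgp
    exact hkey
  rw [h1]
  haveI : SigmaFinite (((volume : Measure (↥D → ℝ)).prod (volume : Measure (↥R → ℝ))).withDensity
      (fun q : (↥D → ℝ) × (↥R → ℝ) => (fun a : ↥D → ℝ => ENNReal.ofReal (Real.sqrt (((finsetBlock M D D
      - finsetBlock M D L * (finsetBlock M L L)⁻¹ * finsetBlock M L D
      - finsetBlock M D R * (finsetBlock M R R)⁻¹ * finsetBlock M R D)).det / (2 * Real.pi) ^ (Fintype.card ↥D)) * Real.exp (-(1/2) * (a ⬝ᵥ ((finsetBlock M D D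
      - finsetBlock M D L * (finsetBlock M L L)⁻¹ * finsetBlock M L D
      - finsetBlock M D R * (finsetBlock M R R)⁻¹ * finsetBlock M R D)).mulVec a)))) q.1 * (fun a : ↥R → ℝ => ENNReal.ofReal (Real.sqrt ((finsetBlock M R R).det / (2 * Real.pi) ^ (Fintype.card ↥R)) * Real.exp (-(1/2) * (a ⬝ᵥ (finsetBlock M R R).mulVec a)))) q.2)) :=
    SigmaFinite.withDensity_of_ne_top (ae_of_all _ fun q =>
      ENNReal.mul_ne_top ENNReal.ofReal_ne_top ENNReal.ofReal_ne_top)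
  have h2 : (gaussianOf (finsetBlock M L L)).prod
        ((gaussianOf ((finsetBlock M D D
      - finsetBlock M D L * (finsetBlock M L L)⁻¹ * finsetBlock M L D
      - finsetBlock M D R * (finsetBlock M R R)⁻¹ * finsetBlock M R D))).prod (gaussianOf (finsetBlock M R R)))
      = (volume : Measure ((↥L → ℝ) × ((↥D → ℝ) × (↥R → ℝ)))).withDensity (fun p : (↥L → ℝ) × ((↥D → ℝ) × (↥R → ℝ)) => (fun a : ↥L → ℝ => ENNReal.ofReal (Real.sqrt ((finsetBlock M L L).det / (2 * Real.pi) ^ (Fintype.card ↥L)) * Real.exp (-(1/2) * (a ⬝ᵥ (finsetBlock M L L).mulVec a)))) p.1 * ((fun a : ↥D → ℝ => ENNReal.ofReal (Real.sqrt (((finsetBlock M D D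
      - finsetBlock M D L * (finsetBlock M L L)⁻¹ * finsetBlock M L D
      - finsetBlock M D R * (finsetBlock M R R)⁻¹ * finsetBlock M R D)).det / (2 * Real.pi) ^ (Fintype.card ↥D)) * Real.exp (-(1/2) * (a ⬝ᵥ ((finsetBlock M D D
      - finsetBlock M D L * (finsetBlock M L L)⁻¹ * finsetBlock M L D
      - finsetBlock M D R * (finsetBlock M R R)⁻¹ * finsetBlock M R D)).mulVec a)))) p.2.1 * (fun a : ↥R → ℝ => ENNReal.ofReal (Real.sqrt ((finsetBlock M R R).det / (2 * Real.pi) ^ (Fintype.card ↥R)) * Real.exp (-(1/2) * (a ⬝ᵥ (finsetBlock M R R).mulVec a)))) p.2.2)) := by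
    simp only [gaussianOf]
    have hmNR : Measurable (fun q : (↥D → ℝ) × (↥R → ℝ) => (fun a : ↥D → ℝ => ENNReal.ofReal (Real.sqrt (((finsetBlock M D D
      - finsetBlock M D L * (finsetBlock M L L)⁻¹ * finsetBlock M L D
      - finsetBlock M D R * (finsetBlock M R R)⁻¹ * finsetBlock M R D)).det / (2 * Real.pi) ^ (Fintype.card ↥D)) * Real.exp (-(1/2) * (a ⬝ᵥ ((finsetBlock M D D
      - finsetBlock M D L * (finsetBlock M L L)⁻¹ * finsetBlock M L D
      - finsetBlock M D R * (finsetBlock M R R)⁻¹ * finsetBlock M R D)).mulVec a)))) q.1 * (fun a : ↥R → ℝ => ENNReal.ofReal (Real.sqrt ((finsetBlock M R R).det / (2 * Real.pi) ^ (Fintype.card ↥R)) * Real.exp (-(1/2) * (a ⬝ᵥ (finsetBlock M R R).mulVec a)))) q.2) :=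
      (hmN.comp measurable_fst).mul (hmR.comp measurable_snd)
    rw [StmtAux.prod_withDensity hmN hmR, StmtAux.prod_withDensity hmL hmNR]
    rfl
  exact h2.symm
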